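/- arXiv:2601.20119 — 3 statements merged into one kernel-verified Lean document; each statement's English description precedes it below -/
import Mathlib

section
/- Sign preservation under distributed lumping: for every (i,j) ∈ S̃, the entry Ã_{ij} has the same sign as A_{ij}, i.e. A_{ij} > 0 implies Ã_{ij} > 0 and A_{ij} < 0 implies Ã_{ij} < 0. In particular every diagonal entry Ã_{ii} remains positive. -/
/-- **Sign preservation under distributed lumping.**
Given an `n × n` real matrix `A` with sparsity pattern `S = {(i,j) : A i j ≠ 0}`,
a target pattern `S̃ ⊆ S` containing the diagonal, row excluded-sums `e`,
retained absolute-value sums `T`, and the distributed-lumping matrix `Ã`,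
under the stated assumptions every retained entry of `Ã` has the same sign as the
corresponding entry of `A`; in particular every diagonal entry of `Ã` is positive. -/
theorem distributed_lumping_sign_preservation
    (n : ℕ) (hn : 1 ≤ n)
    (A : Matrix (Fin n) (Fin n) ℝ)
    (Stil : Fin n → Fin n → Prop) [DecidableRel Stil]
    (hsub : ∀ i j, Stil i j → A i j ≠ 0)
    (hdiagmem : ∀ i, Stil i i)
    (e T : Fin n → ℝ)
    (he : ∀ i, e i = ∑ k, if A i k ≠ 0 ∧ ¬ Stil i k then A i k else 0)
    (hT : ∀ i, T i = ∑ k, if Stil i k then |A i k| else 0)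
    (Atil : Matrix (Fin n) (Fin n) ℝ)
    (hAtil : ∀ i j, Atil i j =
      if Stil i j then
        (if e i < 0 then A i j + e i * |A i j| / T i
         else if i = j then A i i + e i else A i j)
      else 0)
    (hApos : ∀ i, 0 < A i i)
    (hrowsum : ∀ i, 0 ≤ ∑ j, A i j)
    (hneg : ∀ i, ∃ k, k ≠ i ∧ Stil i k ∧ A i k < 0) :
    (∀ i j, Stil i j → (0 < A i j → 0 < Atil i j) ∧ (A i j < 0 → Atil i j < 0)) ∧
    (∀ i, 0 < Atil i i) := by

  have hT0 : ∀ i, 0 < T i := by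
    intro i
    rw [hT]
    have h1 : |A i i| ≤ ∑ k, if Stil i k then |A i k| else 0 := by
      have := Finset.single_le_sum (f := fun k => if Stil i k then |A i k| else 0)
        (fun k _ => by split_ifs <;> simp [abs_nonneg]) (Finset.mem_univ i)
      simpa [hdiagmem i] using this
    exact lt_of_lt_of_le (abs_pos.mpr (ne_of_gt (hApos i))) h1
  have hTe : ∀ i, 0 < T i + e i := by
    intro i
    obtain ⟨k, hk, hkS, hkneg⟩ := hneg i
    have hsplit : ∀ j, A i j = (if Stil i j then A i j else 0) +
        (if A i j ≠ 0 ∧ ¬ Stil i j then A i j else 0) := by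
      intro j
      by_cases h1 : Stil i j
      · simp [h1]
      · by_cases h2 : A i j = 0 <;> simp [h1, h2]
    have hR : (∑ j, A i j) = (∑ j, if Stil i j then A i j else 0) + e i := by
      rw [he, ← Finset.sum_add_distrib]
      exact Finset.sum_congr rfl fun j _ => hsplit j
    have hTP : (∑ j, if Stil i j then A i j else 0) < T i := by
      rw [hT]
      apply Finset.sum_lt_sum
      · intro j _
        split_ifs
        · exact le_abs_self _
        · exact le_rfl
      · refine ⟨k, Finset.mem_univ k, ?_⟩
        simp only [if_pos hkS]
        have := abs_of_neg hkneg
        linarith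
    have := hrowsum i
    linarith
  have main : ∀ i j, Stil i j → (0 < A i j → 0 < Atil i j) ∧ (A i j < 0 → Atil i j < 0) := by
    intro i j hS
    rw [hAtil i j, if_pos hS]
    have hTne : T i ≠ 0 := ne_of_gt (hT0 i)
    by_cases hei : e i < 0
    · rw [if_pos hei]
      constructor
      · intro hA
        have h1 : A i j + e i * |A i j| / T i = A i j * (T i + e i) / T i := by
          rw [abs_of_pos hA]; field_simp
        rw [h1]; exact div_pos (mul_pos hA (hTe i)) (hT0 i)
      · intro hA
        have h1 : A i j + e i * |A i j| / T i = A i j * (T i - e i) / T i := by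
          rw [abs_of_neg hA]; field_simp; ring
        rw [h1]
        exact div_neg_of_neg_of_pos (mul_neg_of_neg_of_pos hA (by linarith [hT0 i])) (hT0 i)
    · rw [if_neg hei]
      push_neg at hei
      by_cases hij : i = j
      · subst hij
        rw [if_pos rfl]
        exact ⟨fun _ => by linarith [hApos i], fun h => absurd h (not_lt.mpr (le_of_lt (hApos i)))⟩
      · rw [if_neg hij]; exact ⟨id, id⟩
  exact ⟨main, fun i => (main i i (hdiagmem i)).1 (hApos i)⟩
end

section
/- Positive entries are unchanged after diagonal scaling: for every row i with e_i < 0 and every (i,j) ∈ S̃ with A_{ij} > 0, one has Ã_{ij}/Ã_{ii} = A_{ij}/A_{ii}. That is, on rows where e_i < 0, the positive entries of D̃^{−1}Ã coincide with the corresponding positive entries of D^{−1}A, where D and D̃ denote the diagonals of A and Ã. -/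
/-- **Positive entries are unchanged after diagonal scaling.**
On rows where `e i < 0`, the positive retained entries of the diagonally scaled
lumped matrix `D̃⁻¹ Ã` coincide with the corresponding entries of `D⁻¹ A`:
`Ã i j / Ã i i = A i j / A i i` whenever `(i,j) ∈ S̃` and `A i j > 0`. -/
theorem distributed_lumping_positive_entries_unchanged
    (n : ℕ) (hn : 1 ≤ n)
    (A : Matrix (Fin n) (Fin n) ℝ)
    (Stil : Fin n → Fin n → Prop) [DecidableRel Stil]
    (hsub : ∀ i j, Stil i j → A i j ≠ 0)
    (hdiagmem : ∀ i, Stil i i)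
    (e T : Fin n → ℝ)
    (he : ∀ i, e i = ∑ k, if A i k ≠ 0 ∧ ¬ Stil i k then A i k else 0)
    (hT : ∀ i, T i = ∑ k, if Stil i k then |A i k| else 0)
    (Atil : Matrix (Fin n) (Fin n) ℝ)
    (hAtil : ∀ i j, Atil i j =
      if Stil i j then
        (if e i < 0 then A i j + e i * |A i j| / T i
         else if i = j then A i i + e i else A i j)
      else 0)
    (hApos : ∀ i, 0 < A i i)
    (hrowsum : ∀ i, 0 ≤ ∑ j, A i j)
    (hneg : ∀ i, ∃ k, k ≠ i ∧ Stil i k ∧ A i k < 0) :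
    ∀ i, e i < 0 → ∀ j, Stil i j → 0 < A i j →
      Atil i j / Atil i i = A i j / A i i := by

  intro i hei j hSj hApj
  have hTpos : 0 < T i := by
    rw [hT i]
    apply Finset.sum_pos'
    · intro k _; split <;> simp [abs_nonneg]
    · exact ⟨i, Finset.mem_univ i, by
        rw [if_pos (hdiagmem i)]; exact abs_pos.mpr (ne_of_gt (hApos i))⟩
  have he2 : e i = ∑ k, if ¬ Stil i k then A i k else 0 := by
    rw [he i]
    apply Finset.sum_congr rfl
    intro k _
    by_cases h1 : Stil i k <;> by_cases h2 : A i k = 0 <;> simp [h1, h2]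
  have hsplit : (∑ k, if Stil i k then A i k else 0) + e i = ∑ k, A i k := by
    rw [he2, ← Finset.sum_add_distrib]
    apply Finset.sum_congr rfl
    intro k _
    by_cases h : Stil i k <;> simp [h]
  have hlt : (∑ k, if Stil i k then A i k else 0) < T i := by
    rw [hT i]
    obtain ⟨k, hk, hSk, hAk⟩ := hneg i
    apply Finset.sum_lt_sum
    · intro m _; split
      · exact le_abs_self _
      · exact le_refl _
    · exact ⟨k, Finset.mem_univ k, by
        rw [if_pos hSk, if_pos hSk]
        exact lt_of_lt_of_le hAk (abs_nonneg _)⟩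
  have hTe : 0 < T i + e i := by linarith [hrowsum i]
  have hTne : T i ≠ 0 := ne_of_gt hTpos
  have h1 : Atil i j = A i j * ((T i + e i) / T i) := by
    rw [hAtil i j, if_pos hSj, if_pos hei, abs_of_pos hApj]
    field_simp
  have h2 : Atil i i = A i i * ((T i + e i) / T i) := by
    rw [hAtil i i, if_pos (hdiagmem i), if_pos hei, abs_of_pos (hApos i)]
    field_simp
  rw [h1, h2, mul_div_mul_right _ _ (ne_of_gt (div_pos hTe hTpos))]
end

section
/- Negative entries are amplified after diagonal scaling: for every row i with e_i < 0 and every (i,j) ∈ S̃ with A_{ij} < 0, one has Ã_{ij}/Ã_{ii} = c_i · (A_{ij}/A_{ii}) with c_i = (1 − e_i/T_i)/(1 + e_i/T_i), and this factor satisfies c_i > 1. -/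
/-- **Negative entries are amplified after diagonal scaling.**
On rows where `e i < 0`, every retained negative entry of the diagonally scaled
lumped matrix `D̃⁻¹ Ã` equals the corresponding entry of `D⁻¹ A` multiplied by
`c i = (1 - e i / T i) / (1 + e i / T i)`, and this factor satisfies `c i > 1`. -/
theorem distributed_lumping_negative_entries_amplified
    (n : ℕ) (hn : 1 ≤ n)
    (A : Matrix (Fin n) (Fin n) ℝ)
    (Stil : Fin n → Fin n → Prop) [DecidableRel Stil]
    (hsub : ∀ i j, Stil i j → A i j ≠ 0)
    (hdiagmem : ∀ i, Stil i i)
    (e T : Fin n → ℝ)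
    (he : ∀ i, e i = ∑ k, if A i k ≠ 0 ∧ ¬ Stil i k then A i k else 0)
    (hT : ∀ i, T i = ∑ k, if Stil i k then |A i k| else 0)
    (Atil : Matrix (Fin n) (Fin n) ℝ)
    (hAtil : ∀ i j, Atil i j =
      if Stil i j then
        (if e i < 0 then A i j + e i * |A i j| / T i
         else if i = j then A i i + e i else A i j)
      else 0)
    (hApos : ∀ i, 0 < A i i)
    (hrowsum : ∀ i, 0 ≤ ∑ j, A i j)
    (hneg : ∀ i, ∃ k, k ≠ i ∧ Stil i k ∧ A i k < 0) :
    ∀ i, e i < 0 →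
      (∀ j, Stil i j → A i j < 0 →
        Atil i j / Atil i i =
          ((1 - e i / T i) / (1 + e i / T i)) * (A i j / A i i)) ∧
      1 < (1 - e i / T i) / (1 + e i / T i) := by
  intro i hei
  -- T i > 0
  have hTpos : 0 < T i := by
    rw [hT]
    have h1 : (if Stil i i then |A i i| else 0) ≤
        ∑ k, if Stil i k then |A i k| else 0 := by
      apply Finset.single_le_sum (f := fun k => if Stil i k then |A i k| else 0)
      · intro k _; positivity
      · exact Finset.mem_univ i
    have h2 : (0:ℝ) < if Stil i i then |A i i| else 0 := by
      rw [if_pos (hdiagmem i)]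
      exact abs_pos.mpr (ne_of_gt (hApos i))
    linarith
  -- split the row sum
  have hsplit : (∑ j, A i j) = e i + ∑ k, if Stil i k then A i k else 0 := by
    rw [he, ← Finset.sum_add_distrib]
    apply Finset.sum_congr rfl
    intro k _
    by_cases h : Stil i k
    · simp [h]
    · by_cases h0 : A i k = 0 <;> simp [h, h0]
  -- strict bound : ∑ retained A < T i
  have hstrict : (∑ k, if Stil i k then A i k else 0) < T i := by
    rw [hT]
    obtain ⟨k, _, hk, hkneg⟩ := hneg i
    apply Finset.sum_lt_sum
    · intro m _
      by_cases h : Stil i m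
      · simp only [if_pos h]; exact le_abs_self _
      · simp [h]
    · refine ⟨k, Finset.mem_univ k, ?_⟩
      simp only [if_pos hk]
      rw [abs_of_neg hkneg]; linarith
  have hTe : 0 < T i + e i := by
    have := hrowsum i
    rw [hsplit] at this
    linarith
  have hTne : T i ≠ 0 := ne_of_gt hTpos
  have hTeNe : T i + e i ≠ 0 := ne_of_gt hTe
  have hAiipos := hApos i
  constructor
  · intro j hj hjneg
    rw [hAtil i j, hAtil i i, if_pos hj, if_pos (hdiagmem i), if_pos hei,
      if_pos hei, abs_of_neg hjneg, abs_of_pos hAiipos]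
    have hden : A i i + e i * A i i / T i = A i i * (T i + e i) / T i := by
      field_simp
    have hdenne : A i i + e i * A i i / T i ≠ 0 := by
      rw [hden]
      positivity
    have hx : T i * A i i + e i * A i i ≠ 0 := by
      have h : T i * A i i + e i * A i i = (T i + e i) * A i i := by ring
      rw [h]; positivity
    field_simp
    have hx' : A i i * T i + e i * A i i ≠ 0 := by
      have h : A i i * T i + e i * A i i = (T i + e i) * A i i := by ring
      rw [h]; positivity
    ring
  · have h1 : (0:ℝ) < 1 + e i / T i := by
      have : 1 + e i / T i = (T i + e i) / T i := by field_simp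
      rw [this]; positivity
    rw [lt_div_iff₀ h1]
    have : e i / T i < 0 := div_neg_of_neg_of_pos hei hTpos
    linarith
end
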